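/- The map G : (0,∞)² → ℝ², G(u,v) = (g₁(u,v), g₂(u,v)), where g₁(u,v) = u + (u/v) · φ(v)/(1 − Φ(−v)) and g₂(u,v) = u²/v² + u² + (u²/v) · φ(v)/(1 − Φ(−v)), is injective on (0,∞)². Consequently, for any pair (M₁, M₂) in the range of G, the system g₁(u,v) = M₁, g₂(u,v) = M₂ has exactly one solution (u,v) with u > 0 and v > 0. -/

import Mathlib

open MeasureTheory Real

/-- The standard normal probability density function φ. -/
noncomputable def stdPhi (x : ℝ) : ℝ := Real.exp (-x ^ 2 / 2) / Real.sqrt (2 * Real.pi)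

/-- The standard normal cumulative distribution function Φ. -/
noncomputable def stdCDF (x : ℝ) : ℝ := ∫ u in Set.Iic x, stdPhi u

/-- The stationary first moment g₁(u,v) = u + (u/v)·φ(v)/(1 − Φ(−v)). -/
noncomputable def g1 (u v : ℝ) : ℝ := u + (u / v) * stdPhi v / (1 - stdCDF (-v))

/-- The stationary second moment
g₂(u,v) = u²/v² + u² + (u²/v)·φ(v)/(1 − Φ(−v)). -/
noncomputable def g2 (u v : ℝ) : ℝ :=
  u ^ 2 / v ^ 2 + u ^ 2 + (u ^ 2 / v) * stdPhi v / (1 - stdCDF (-v))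

/-- The moment map G(u,v) = (g₁(u,v), g₂(u,v)). -/
noncomputable def momentMap (p : ℝ × ℝ) : ℝ × ℝ := (g1 p.1 p.2, g2 p.1 p.2)

open Set

lemma stdPhi_pos (x : ℝ) : 0 < stdPhi x := by
  unfold stdPhi
  positivity

lemma stdPhi_def (x : ℝ) : stdPhi x = Real.exp (-x ^ 2 / 2) / Real.sqrt (2 * Real.pi) := rfl

lemma stdPhi_eq (x : ℝ) : stdPhi x = Real.exp (-(1/2) * x ^ 2) / Real.sqrt (2 * Real.pi) := by
  unfold stdPhi; ring_nf

lemma continuous_stdPhi : Continuous stdPhi := by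
  unfold stdPhi
  fun_prop

lemma integrable_stdPhi : Integrable stdPhi := by
  have : Integrable (fun x : ℝ => Real.exp (-(1/2) * x ^ 2)) := integrable_exp_neg_mul_sq (by norm_num)
  have h2 := this.mul_const (Real.sqrt (2 * Real.pi))⁻¹
  refine h2.congr ?_
  filter_upwards with x
  simp [stdPhi_eq, div_eq_mul_inv]

lemma integral_stdPhi : ∫ x, stdPhi x = 1 := by
  have h := integral_gaussian (1/2 : ℝ)
  have h2 : ∫ x : ℝ, Real.exp (-(1/2) * x ^ 2) = Real.sqrt (2 * Real.pi) := by
    rw [h]; rw [show Real.pi / (1/2) = 2 * Real.pi by ring]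
  rw [show (fun x => stdPhi x) = fun x => Real.exp (-(1/2) * x ^ 2) / Real.sqrt (2 * Real.pi) by
    funext x; exact stdPhi_eq x]
  rw [integral_div, h2, div_self]
  positivity

lemma stdPhi_neg (x : ℝ) : stdPhi (-x) = stdPhi x := by unfold stdPhi; ring_nf

lemma stdCDF_reflect (v : ℝ) : stdCDF (-v) = 1 - stdCDF v := by
  have hsplit : stdCDF v + ∫ x in Ioi v, stdPhi x = 1 := by
    rw [stdCDF, intervalIntegral.integral_Iic_add_Ioi integrable_stdPhi.integrableOn
      integrable_stdPhi.integrableOn, integral_stdPhi]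
  have hrefl : (∫ x in Ioi v, stdPhi x) = stdCDF (-v) := by
    rw [stdCDF, ← integral_comp_neg_Ioi]
    simp_rw [stdPhi_neg]
  linarith

lemma stdCDF_pos (x : ℝ) : 0 < stdCDF x := by
  rw [stdCDF, setIntegral_pos_iff_support_of_nonneg_ae]
  · have : (Function.support stdPhi) = univ := by
      ext y; simp [Function.support, (stdPhi_pos y).ne']
    rw [this]
    simp
  · filter_upwards with y using (stdPhi_pos y).le
  · exact integrable_stdPhi.integrableOn

lemma stdCDF_lt_one (x : ℝ) : stdCDF x < 1 := by
  have := stdCDF_pos (-x)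
  rw [stdCDF_reflect] at this; linarith

lemma stdCDF_zero : stdCDF 0 = 1/2 := by
  have := stdCDF_reflect 0
  rw [neg_zero] at this; linarith

lemma hasDerivAt_stdCDF (x : ℝ) : HasDerivAt stdCDF (stdPhi x) x := by
  have key : ∀ y : ℝ, stdCDF y = stdCDF 0 + ∫ t in (0:ℝ)..y, stdPhi t := by
    intro y
    have h2 := intervalIntegral.integral_Iic_sub_Iic
      (integrable_stdPhi.integrableOn (s := Iic 0))
      (integrable_stdPhi.integrableOn (s := Iic y))
    simp only [stdCDF]
    linarith
  have h : HasDerivAt (fun y => stdCDF 0 + ∫ t in (0:ℝ)..y, stdPhi t) (stdPhi x) x := by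
    refine HasDerivAt.const_add _ ?_
    exact intervalIntegral.integral_hasDerivAt_right
      integrable_stdPhi.intervalIntegrable
      (continuous_stdPhi.stronglyMeasurableAtFilter _ _)
      continuous_stdPhi.continuousAt
  exact h.congr_of_eventuallyEq (Filter.Eventually.of_forall key)

lemma stdCDF_interval (y : ℝ) : stdCDF y - stdCDF 0 = ∫ t in (0:ℝ)..y, stdPhi t := by
  have h2 := intervalIntegral.integral_Iic_sub_Iic
    (integrable_stdPhi.integrableOn (s := Set.Iic 0))
    (integrable_stdPhi.integrableOn (s := Set.Iic y))
  simp only [stdCDF]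
  linarith

lemma hasDerivAt_stdPhi (x : ℝ) : HasDerivAt stdPhi (-x * stdPhi x) x := by
  have h1 : HasDerivAt (fun y : ℝ => -y ^ 2 / 2) (-x) x := by
    have := ((hasDerivAt_pow 2 x).neg).div_const 2
    simpa using this.congr_deriv (by ring)
  have h2 := (h1.exp).div_const (Real.sqrt (2 * Real.pi))
  have : (fun y : ℝ => Real.exp (-y ^ 2 / 2) / Real.sqrt (2 * Real.pi)) = stdPhi := by
    funext y; rw [stdPhi_def]
  rw [this] at h2
  refine h2.congr_deriv ?_
  rw [stdPhi_def]; ring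

lemma stdCDF_lower (v : ℝ) (hv : 0 ≤ v) : 1/2 + v * stdPhi v ≤ stdCDF v := by
  have h : stdCDF v - stdCDF 0 = ∫ t in (0:ℝ)..v, stdPhi t := stdCDF_interval v
  have hmono : ∀ t ∈ Set.Icc (0:ℝ) v, stdPhi v ≤ stdPhi t := by
    intro t ht
    rw [stdPhi_def, stdPhi_def]
    have hs : (0:ℝ) < Real.sqrt (2*Real.pi) := by positivity
    refine (div_le_div_iff_of_pos_right hs).mpr (Real.exp_le_exp.2 ?_)
    nlinarith [ht.1, ht.2]
  have hle : (∫ t in (0:ℝ)..v, (stdPhi v)) ≤ ∫ t in (0:ℝ)..v, stdPhi t := by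
    apply intervalIntegral.integral_mono_on hv
    · exact intervalIntegrable_const
    · exact integrable_stdPhi.intervalIntegrable
    · exact hmono
  rw [intervalIntegral.integral_const, smul_eq_mul, sub_zero] at hle
  rw [stdCDF_zero] at h
  linarith

noncomputable def stdM (v : ℝ) : ℝ := stdPhi v / stdCDF v

noncomputable def E0 (v : ℝ) : ℝ := 12533/10000*(1+v^2/2+v^4/8)+v

lemma E0_pos {v : ℝ} (hv : 0 < v) : 0 < E0 v := by unfold E0; positivity

lemma stdM_pos (v : ℝ) : 0 < stdM v := div_pos (stdPhi_pos v) (stdCDF_pos v)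

lemma sqrt_two_pi_ge : (25066/10000 : ℝ) ≤ Real.sqrt (2 * Real.pi) := by
  rw [show (25066/10000 : ℝ) = Real.sqrt ((25066/10000)^2) by
    rw [Real.sqrt_sq (by norm_num)]]
  apply Real.sqrt_le_sqrt
  nlinarith [Real.pi_gt_d6]

lemma stdM_le {v : ℝ} (hv : 0 < v) : stdM v ≤ 1 / E0 v := by
  have hφ := stdPhi_pos v
  have hΦl := stdCDF_lower v hv.le
  have hden : (0:ℝ) < 1/2 + v * stdPhi v := by positivity
  have h1 : stdM v ≤ stdPhi v / (1/2 + v * stdPhi v) := by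
    unfold stdM
    exact div_le_div_of_nonneg_left hφ.le hden hΦl
  have h2 : stdPhi v / (1/2 + v * stdPhi v) = 1 / (1/(2 * stdPhi v) + v) := by
    field_simp
  have h3 : E0 v ≤ 1/(2 * stdPhi v) + v := by
    have hexp : 1 + v^2/2 + v^4/8 ≤ Real.exp (v^2/2) := by
      have := Real.quadratic_le_exp_of_nonneg (x := v^2/2) (by positivity)
      nlinarith [this]
    have hphi : 1/(2 * stdPhi v) = Real.sqrt (2*Real.pi) / 2 * Real.exp (v^2/2) := by
      rw [stdPhi_def]
      rw [div_eq_iff (by positivity)]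
      rw [show -v^2/2 = -(v^2/2) by ring, Real.exp_neg]
      have hE : (0:ℝ) < Real.exp (v^2/2) := Real.exp_pos _
      field_simp
    rw [hphi]
    unfold E0
    have hc : (12533/10000 : ℝ) ≤ Real.sqrt (2*Real.pi) / 2 := by
      linarith [sqrt_two_pi_ge]
    have hexp0 : (0:ℝ) < Real.exp (v^2/2) := Real.exp_pos _
    nlinarith [hc, hexp, hexp0, sq_nonneg v]
  calc stdM v ≤ stdPhi v / (1/2 + v * stdPhi v) := h1
    _ = 1 / (1/(2 * stdPhi v) + v) := h2
    _ ≤ 1 / E0 v := by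
        apply div_le_div_of_nonneg_left (by norm_num) (E0_pos hv) h3

lemma poly_key {v : ℝ} (hv : 0 < v) :
    (v * E0 v + 1) * (v^2 * E0 v + v + 3 * E0 v) < 2 * (E0 v)^3 := by
  have hid : 2*(E0 v)^3 - (v*E0 v+1)*(v^2*E0 v+v+3*E0 v)
      = (42923911/680000000)*(v^4*(v-17/10)^2)
      + (157076089/4800000000)*(v^6*(v-3)^2)
      + (157076089/7680000000)*(v^8*(v-3)^2)
      + (157076089/25600000000)*(v^10*(v-2)^2)
      + (88684623437/500000000000 + (71228267/100000000)*v
        + (1519353870311/1000000000000)*v^2 + (7076089/50000000)*v^3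
        + (68455123933/4000000000000)*v^4 + (377132743277/8500000000000)*v^6
        + (2261353040299/96000000000000)*v^8
        + (9078526715933/192000000000000)*v^10
        + (397873733437/256000000000000)*v^12) := by
    unfold E0; ring
  nlinarith [mul_nonneg (pow_nonneg hv.le 4) (sq_nonneg (v - 17/10)),
    mul_nonneg (pow_nonneg hv.le 6) (sq_nonneg (v - 3)),
    mul_nonneg (pow_nonneg hv.le 8) (sq_nonneg (v - 3)),
    mul_nonneg (pow_nonneg hv.le 10) (sq_nonneg (v - 2)),
    pow_nonneg hv.le 2, pow_nonneg hv.le 3, pow_nonneg hv.le 4,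
    pow_nonneg hv.le 6, pow_nonneg hv.le 8, pow_nonneg hv.le 10,
    pow_nonneg hv.le 12, hv.le, hid]


lemma mkey {v : ℝ} (hv : 0 < v) :
    stdM v * (v + stdM v) * (v * (v + stdM v) + 3) < 2 := by
  have hm := stdM_pos v
  have hA := stdM_le hv
  have hE := E0_pos hv
  have hA0 : (0:ℝ) < 1 / E0 v := by positivity
  have step : stdM v * (v + stdM v) * (v * (v + stdM v) + 3)
      ≤ (1/E0 v) * (v + 1/E0 v) * (v * (v + 1/E0 v) + 3) := by
    gcongr <;> positivity
  have heq : (1/E0 v) * (v + 1/E0 v) * (v * (v + 1/E0 v) + 3)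
      = ((v * E0 v + 1) * (v^2 * E0 v + v + 3 * E0 v)) / (E0 v)^3 := by
    field_simp
  have hlt : ((v * E0 v + 1) * (v^2 * E0 v + v + 3 * E0 v)) / (E0 v)^3 < 2 := by
    rw [div_lt_iff₀ (by positivity)]
    calc (v * E0 v + 1) * (v^2 * E0 v + v + 3 * E0 v) < 2 * (E0 v)^3 := poly_key hv
      _ = 2 * (E0 v)^3 := rfl
  calc stdM v * (v + stdM v) * (v * (v + stdM v) + 3)
      ≤ (1/E0 v) * (v + 1/E0 v) * (v * (v + 1/E0 v) + 3) := step
    _ = _ := heq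
    _ < 2 := hlt

noncomputable def PsiF (v : ℝ) : ℝ :=
  (1 - stdM v * (v + stdM v)) / (v + stdM v) ^ 2

lemma hasDerivAt_stdM (v : ℝ) :
    HasDerivAt stdM (-(stdM v) * (v + stdM v)) v := by
  have h := (hasDerivAt_stdPhi v).div (hasDerivAt_stdCDF v) (stdCDF_pos v).ne'
  have : (-v * stdPhi v * stdCDF v - stdPhi v * stdPhi v) / stdCDF v ^ 2
      = -(stdM v) * (v + stdM v) := by
    have hC : stdCDF v ≠ 0 := (stdCDF_pos v).ne'
    unfold stdM
    rw [div_eq_iff (pow_ne_zero 2 hC)]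
    field_simp
    ring
  rw [this] at h
  exact h

lemma S_pos {v : ℝ} (hv : 0 < v) : 0 < v + stdM v := by
  have := stdM_pos v; linarith

lemma hasDerivAt_PsiF {v : ℝ} (hv : 0 < v) :
    HasDerivAt PsiF
      ((stdM v * (v + stdM v) * (v * (v + stdM v) + 3) - 2) / (v + stdM v) ^ 3) v := by
  have hm := hasDerivAt_stdM v
  have hs : HasDerivAt (fun v => v + stdM v) (1 + -(stdM v) * (v + stdM v)) v :=
    (hasDerivAt_id v).add hm
  have hS := S_pos hv
  have hnum : HasDerivAt (fun v => 1 - stdM v * (v + stdM v))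
      (-(-(stdM v) * (v + stdM v) * (v + stdM v)
        + stdM v * (1 + -(stdM v) * (v + stdM v)))) v := by
    exact (hm.mul hs).const_sub 1
  have hden : HasDerivAt (fun v => (v + stdM v) ^ 2)
      (2 * (v + stdM v) ^ 1 * (1 + -(stdM v) * (v + stdM v))) v := hs.pow 2
  have h := hnum.div hden (pow_ne_zero 2 hS.ne')
  refine h.congr_deriv ?_
  have hS' : (v + stdM v) ≠ 0 := hS.ne'
  field_simp
  ring
lemma strictAntiOn_PsiF : StrictAntiOn PsiF (Ioi (0:ℝ)) := by
  apply strictAntiOn_of_deriv_neg (convex_Ioi 0)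
  · intro x hx
    exact ((hasDerivAt_PsiF hx).continuousAt).continuousWithinAt
  · intro x hx
    rw [interior_Ioi] at hx
    rw [(hasDerivAt_PsiF hx).deriv]
    apply div_neg_of_neg_of_pos
    · linarith [mkey hx]
    · exact pow_pos (S_pos hx) 3

lemma one_sub_reflect (v : ℝ) : 1 - stdCDF (-v) = stdCDF v := by
  rw [stdCDF_reflect]; ring

lemma stdPhi_eq_m (v : ℝ) : stdPhi v = stdM v * stdCDF v := by
  unfold stdM; field_simp [(stdCDF_pos v).ne']

lemma g1_eq {v : ℝ} (hv : 0 < v) (u : ℝ) : g1 u v = (u / v) * (v + stdM v) := by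
  unfold g1
  rw [one_sub_reflect, stdPhi_eq_m]
  field_simp [(stdCDF_pos v).ne', hv.ne']

lemma g2_eq {v : ℝ} (hv : 0 < v) (u : ℝ) :
    g2 u v = (u / v) ^ 2 * (1 + v * (v + stdM v)) := by
  unfold g2
  rw [one_sub_reflect, stdPhi_eq_m]
  field_simp [(stdCDF_pos v).ne', hv.ne']
  ring

lemma Psi_g {u v : ℝ} (hu : 0 < u) (hv : 0 < v) :
    PsiF v = g2 u v / (g1 u v) ^ 2 - 1 := by
  rw [g1_eq hv, g2_eq hv]
  unfold PsiF
  have hs := S_pos hv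
  have huv : u / v ≠ 0 := (div_pos hu hv).ne'
  field_simp
  ring

/-- The map G = (g₁, g₂) is injective on (0,∞)²; consequently, for any (M₁, M₂) in the
range of G on (0,∞)², the system g₁(u,v) = M₁, g₂(u,v) = M₂ has exactly one solution
with u > 0 and v > 0. -/
theorem momentMap_injective :
    Set.InjOn momentMap (Set.Ioi (0 : ℝ) ×ˢ Set.Ioi (0 : ℝ)) ∧
      ∀ M ∈ momentMap '' (Set.Ioi (0 : ℝ) ×ˢ Set.Ioi (0 : ℝ)),
        ∃! p : ℝ × ℝ, p ∈ Set.Ioi (0 : ℝ) ×ˢ Set.Ioi (0 : ℝ) ∧ momentMap p = M := by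
  have hinj : Set.InjOn momentMap (Set.Ioi (0 : ℝ) ×ˢ Set.Ioi (0 : ℝ)) := by
    rintro ⟨u, v⟩ ⟨hu, hv⟩ ⟨u', v'⟩ ⟨hu', hv'⟩ h
    simp only [momentMap, Prod.mk.injEq] at h
    obtain ⟨h1, h2⟩ := h
    simp only [Set.mem_Ioi] at hu hv hu' hv'
    have hPsi : PsiF v = PsiF v' := by
      rw [Psi_g hu hv, Psi_g hu' hv', h1, h2]
    have hvv : v = v' := strictAntiOn_PsiF.injOn hv hv' hPsi
    subst hvv
    rw [g1_eq hv, g1_eq hv] at h1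
    have hs := S_pos hv
    have huu : u / v = u' / v := mul_right_cancel₀ hs.ne' h1
    have : u = u' := by
      field_simp [hv.ne'] at huu
      exact huu
    simp [this]
  refine ⟨hinj, ?_⟩
  rintro M ⟨p, hp, rfl⟩
  exact ⟨p, ⟨hp, rfl⟩, fun q hq => hinj hq.1 hp hq.2⟩
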